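/- Let ξ be a transcendental real number, let a, b, c, d, γ be natural numbers (with γ > 0), and let μ be a nonzero rational number. If a/(aξ+γ) − b/(bξ+γ) = μ(c/(cξ+γ) − d/(dξ+γ)), then either (a,c)=(b,d), or μ=1 and (a,b)=(c,d), or μ=−1 and (a,b)=(d,c). -/

import Mathlib

lemma lin3_aux (ξ : ℝ) (hξ : Transcendental ℚ ξ) (q0 q1 q2 : ℚ)
    (h : (q0 : ℝ) + q1 * ξ + q2 * ξ ^ 2 = 0) : q0 = 0 ∧ q1 = 0 ∧ q2 = 0 := by
  by_contra hc
  apply hξ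
  refine ⟨Polynomial.C q0 + Polynomial.C q1 * Polynomial.X
      + Polynomial.C q2 * Polynomial.X ^ 2, ?_, ?_⟩
  · intro h0
    apply hc
    have h2 : q2 = 0 := by
      have := congrArg (fun p => Polynomial.coeff p 2) h0
      simpa using this
    have h1 : q1 = 0 := by
      have := congrArg (fun p => Polynomial.coeff p 1) h0
      simpa using this
    have h00 : q0 = 0 := by
      have := congrArg (fun p => Polynomial.coeff p 0) h0
      simpa using this
    exact ⟨h00, h1, h2⟩
  · simpa using h

theorem stmt_0 (ξ : ℝ) (hξ : Transcendental ℚ ξ) (a b c d γ : ℕ) (hγ : 0 < γ)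
    (μ : ℚ) (hμ : μ ≠ 0)
    (h : (a : ℝ) / (a * ξ + γ) - b / (b * ξ + γ)
        = μ * ((c : ℝ) / (c * ξ + γ) - d / (d * ξ + γ))) :
    (a = b ∧ c = d) ∨ (μ = 1 ∧ a = c ∧ b = d) ∨ (μ = -1 ∧ a = d ∧ b = c) := by
  have hγR : (γ : ℝ) ≠ 0 := Nat.cast_ne_zero.mpr hγ.ne'
  have hden : ∀ n : ℕ, (n : ℝ) * ξ + γ ≠ 0 := by
    intro n hn
    rcases Nat.eq_zero_or_pos n with h0 | hpos
    · simp [h0] at hn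
      exact hγ.ne' hn
    · have hn' : (n : ℝ) ≠ 0 := Nat.cast_ne_zero.mpr hpos.ne'
      have hξval : ξ = ((-(γ : ℚ) / n : ℚ) : ℝ) := by
        push_cast
        field_simp
        linarith
      apply hξ
      rw [hξval]
      exact isAlgebraic_algebraMap _
  have ha := hden a
  have hb := hden b
  have hc := hden c
  have hd := hden d
  rw [div_sub_div _ _ ha hb, div_sub_div _ _ hc hd, mul_div_assoc',
    div_eq_div_iff (mul_ne_zero ha hb) (mul_ne_zero hc hd)] at h
  set A : ℚ := (a : ℚ) - b with hA
  set C : ℚ := (c : ℚ) - d with hC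
  have key : (((A - μ * C) * γ ^ 3 : ℚ) : ℝ)
      + ((A * (c + d) - μ * C * (a + b)) * γ ^ 2 : ℚ) * ξ
      + (((A * c * d - μ * C * a * b) * γ : ℚ)) * ξ ^ 2 = 0 := by
    simp only [hA, hC]
    push_cast
    linear_combination h
  obtain ⟨e0, e1, e2⟩ := lin3_aux ξ hξ _ _ _ key
  have hγQ : (γ : ℚ) ≠ 0 := Nat.cast_ne_zero.mpr hγ.ne'
  have hAC : A = μ * C := by
    have := mul_eq_zero.mp e0
    rcases this with h' | h'
    · linarith
    · exact absurd h' (pow_ne_zero 3 hγQ)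
  by_cases hA0 : A = 0
  · left
    have hC0 : C = 0 := by
      rcases mul_eq_zero.mp (hA0 ▸ hAC.symm) with h' | h'
      · exact absurd h' hμ
      · exact h'
    constructor
    · have : (a : ℚ) = b := by rw [hA] at hA0; linarith
      exact_mod_cast this
    · have : (c : ℚ) = d := by rw [hC] at hC0; linarith
      exact_mod_cast this
  · have hC0 : C ≠ 0 := by
      intro h'
      exact hA0 (by rw [hAC, h', mul_zero])
    have hsum : (c : ℚ) + d = (a : ℚ) + b := by
      have e1' : (A * (c + d) - μ * C * (a + b)) = 0 := by
        rcases mul_eq_zero.mp e1 with h' | h'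
        · exact h'
        · exact absurd h' (pow_ne_zero 2 hγQ)
      have : A * ((c : ℚ) + d) = A * ((a : ℚ) + b) := by
        linear_combination e1' - ((a : ℚ) + (b : ℚ)) * hAC
      exact mul_left_cancel₀ hA0 this
    have hprod : (c : ℚ) * d = (a : ℚ) * b := by
      have e2' : A * (c : ℚ) * d - μ * C * a * b = 0 := by
        rcases mul_eq_zero.mp e2 with h' | h'
        · exact h'
        · exact absurd h' hγQ
      have : A * ((c : ℚ) * d) = A * ((a : ℚ) * b) := by
        linear_combination e2' - ((a : ℚ) * (b : ℚ)) * hAC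
      exact mul_left_cancel₀ hA0 this
    have hquad : ((a : ℚ) - c) * ((a : ℚ) - d) = 0 := by
      linear_combination (-(a : ℚ)) * hsum + hprod
    rcases mul_eq_zero.mp hquad with h' | h'
    · -- a = c
      have hac : (a : ℚ) = c := by linarith
      have hbd : (b : ℚ) = d := by linarith
      have hCA : C = A := by rw [hA, hC, hac, hbd]
      have hμ1 : μ = 1 := by
        have : μ * A = 1 * A := by rw [← hCA]; linarith [hAC]
        exact mul_right_cancel₀ hA0 this
      exact Or.inr (Or.inl ⟨hμ1, by exact_mod_cast hac, by exact_mod_cast hbd⟩)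
    · -- a = d
      have had : (a : ℚ) = d := by linarith
      have hbc : (b : ℚ) = c := by linarith
      have hCA : C = -A := by rw [hA, hC, had, hbc]; ring
      have hμ1 : μ = -1 := by
        have : μ * A = (-1) * A := by
          have := hAC
          rw [hCA] at this
          linarith
        exact mul_right_cancel₀ hA0 this
      exact Or.inr (Or.inr ⟨hμ1, by exact_mod_cast had, by exact_mod_cast hbc⟩)
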